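/- Let (ξ_i, F_i)_{i=1,...,n} be supermartingale differences with ξ_i ≤ 1 a.s., and let Ψ_k(λ) = Σ_{i=1}^k log E[e^{λξ_i} | F_{i-1}] and ⟨X⟩_k = Σ_{i=1}^k E[ξ_i² | F_{i-1}]. Then for every λ ≥ 0 and 1 ≤ k ≤ n, Ψ_k(λ) ≤ k·f(λ, ⟨X⟩_k/k) almost surely, where f(λ,t) = log((1/(1+t))e^{−λt} + (t/(1+t))e^{λ}). -/

import Mathlib

open MeasureTheory Real Finset Filter


lemma bennett_int (x : ℝ) :
    Real.exp x - 1 - x = x^2 * ∫ θ in (0:ℝ)..1, (1-θ) * Real.exp (θ*x) := by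
  rcases eq_or_ne x 0 with h | h
  · simp [h]
  · have hd : ∀ θ ∈ Set.uIcc (0:ℝ) 1,
        HasDerivAt (fun θ : ℝ => (1-θ) * Real.exp (θ*x) / x + Real.exp (θ*x) / x^2)
          ((1-θ) * Real.exp (θ*x)) θ := by
      intro θ _
      have he : HasDerivAt (fun θ : ℝ => Real.exp (θ*x)) (Real.exp (θ*x) * x) θ :=
        by simpa using ((hasDerivAt_id θ).mul_const x).exp
      have h1 : HasDerivAt (fun θ : ℝ => (1-θ)) (-1 : ℝ) θ := by
        simpa using (hasDerivAt_id θ).const_sub 1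
      have h2 : HasDerivAt (fun θ : ℝ => (1-θ) * Real.exp (θ*x))
          ((-1) * Real.exp (θ*x) + (1-θ) * (Real.exp (θ*x) * x)) θ := h1.mul he
      have h3 := (h2.div_const x).add (he.div_const (x^2))
      refine h3.congr_deriv ?_
      field_simp
      ring
    have hcont : IntervalIntegrable (fun θ : ℝ => (1-θ) * Real.exp (θ*x))
        MeasureTheory.volume 0 1 := by
      apply Continuous.intervalIntegrable
      continuity
    rw [intervalIntegral.integral_eq_sub_of_hasDerivAt hd hcont]
    field_simp
    simp only [mul_zero, Real.exp_zero]
    ring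

lemma bennett_mono {u s : ℝ} (h : u ≤ s) :
    s^2 * (Real.exp u - 1 - u) ≤ u^2 * (Real.exp s - 1 - s) := by
  rw [bennett_int u, bennett_int s]
  have hmono : (∫ θ in (0:ℝ)..1, (1-θ) * Real.exp (θ*u))
      ≤ ∫ θ in (0:ℝ)..1, (1-θ) * Real.exp (θ*s) := by
    apply intervalIntegral.integral_mono_on zero_le_one
      (Continuous.intervalIntegrable (by continuity) _ _)
      (Continuous.intervalIntegrable (by continuity) _ _)
    intro θ hθ
    have h1 : (0:ℝ) ≤ 1 - θ := by linarith [hθ.2]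
    have h2 : Real.exp (θ*u) ≤ Real.exp (θ*s) :=
      Real.exp_le_exp.2 (mul_le_mul_of_nonneg_left h hθ.1)
    exact mul_le_mul_of_nonneg_left h2 h1
  calc s^2 * (u^2 * ∫ θ in (0:ℝ)..1, (1-θ) * Real.exp (θ*u))
      = (s^2*u^2) * ∫ θ in (0:ℝ)..1, (1-θ) * Real.exp (θ*u) := by ring
    _ ≤ (s^2*u^2) * ∫ θ in (0:ℝ)..1, (1-θ) * Real.exp (θ*s) :=
        mul_le_mul_of_nonneg_left hmono (by positivity)
    _ = u^2 * (s^2 * ∫ θ in (0:ℝ)..1, (1-θ) * Real.exp (θ*s)) := by ring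



noncomputable def Cc (lam t : ℝ) : ℝ :=
  (Real.exp lam - Real.exp (-(lam*t))*(1+lam*(1+t)))/(1+t)^2

noncomputable def Ac (lam t : ℝ) : ℝ :=
  Real.exp (-(lam*t))*(1+lam*t) + t^2 * Cc lam t

noncomputable def Bc (lam t : ℝ) : ℝ :=
  lam*Real.exp (-(lam*t)) + 2*t*Cc lam t

lemma quad_bound {lam x t : ℝ} (hlam : 0 ≤ lam) (hx : x ≤ 1) (ht : 0 ≤ t) :
    Real.exp (lam*x) ≤ Ac lam t + Bc lam t * x + Cc lam t * x^2 := by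
  have ht1 : (0:ℝ) < 1 + t := by linarith
  have key := bennett_mono (u := lam*(x+t)) (s := lam*(1+t))
    (mul_le_mul_of_nonneg_left (by linarith) hlam)
  -- cleared form
  have cleared : (Real.exp (lam*(x+t)) - 1 - lam*(x+t)) * (1+t)^2
      ≤ (x+t)^2 * (Real.exp (lam*(1+t)) - 1 - lam*(1+t)) := by
    rcases eq_or_lt_of_le hlam with h0 | hpos
    · rw [← h0]; simp
    · have hl2 : (0:ℝ) < lam^2 := by positivity
      refine le_of_mul_le_mul_left ?_ hl2
      calc lam^2 * ((Real.exp (lam*(x+t)) - 1 - lam*(x+t)) * (1+t)^2)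
          = (lam*(1+t))^2 * (Real.exp (lam*(x+t)) - 1 - lam*(x+t)) := by ring
        _ ≤ (lam*(x+t))^2 * (Real.exp (lam*(1+t)) - 1 - lam*(1+t)) := key
        _ = lam^2 * ((x+t)^2 * (Real.exp (lam*(1+t)) - 1 - lam*(1+t))) := by ring
  have hP : (0:ℝ) < Real.exp (-(lam*t)) := Real.exp_pos _
  have e1 : Real.exp (-(lam*t)) * Real.exp (lam*(x+t)) = Real.exp (lam*x) := by
    rw [← Real.exp_add]; ring_nf
  have e2 : Real.exp (-(lam*t)) * Real.exp (lam*(1+t)) = Real.exp lam := by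
    rw [← Real.exp_add]; ring_nf
  have KEY : Real.exp (lam*x) * (1+t)^2
      ≤ (Real.exp (-(lam*t))*(1+lam*(x+t))) * (1+t)^2
        + (x+t)^2 * (Real.exp lam - Real.exp (-(lam*t))*(1+lam*(1+t))) := by
    have hmul := mul_le_mul_of_nonneg_left cleared hP.le
    nlinarith [hmul, e1, e2]
  have expand : Ac lam t + Bc lam t * x + Cc lam t * x^2
      = ((Real.exp (-(lam*t))*(1+lam*(x+t))) * (1+t)^2
        + (x+t)^2 * (Real.exp lam - Real.exp (-(lam*t))*(1+lam*(1+t)))) / (1+t)^2 := by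
    unfold Ac Bc Cc
    field_simp
    ring
  rw [expand, le_div_iff₀ (by positivity)]
  linarith [KEY]

lemma Cc_nonneg {lam t : ℝ} (hlam : 0 ≤ lam) (ht : 0 ≤ t) : 0 ≤ Cc lam t := by
  unfold Cc
  apply div_nonneg _ (by positivity)
  have h := Real.add_one_le_exp (lam*(1+t))
  have e2 : Real.exp (-(lam*t)) * Real.exp (lam*(1+t)) = Real.exp lam := by
    rw [← Real.exp_add]; ring_nf
  nlinarith [Real.exp_pos (-(lam*t))]

lemma Cc_le {lam t : ℝ} (hlam : 0 ≤ lam) (ht : 0 ≤ t) : Cc lam t * (1+t)^2 ≤ Real.exp lam := by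
  unfold Cc
  rw [div_mul_cancel₀ _ (by positivity)]
  nlinarith [Real.exp_pos (-(lam*t)), mul_nonneg hlam (by linarith : (0:ℝ) ≤ 1+t)]

lemma Pt_le_one {lam t : ℝ} (hlam : 0 ≤ lam) (ht : 0 ≤ t) :
    Real.exp (-(lam*t)) * (1 + lam*t) ≤ 1 := by
  have h := Real.add_one_le_exp (lam*t)
  have e : Real.exp (-(lam*t)) * Real.exp (lam*t) = 1 := by
    rw [← Real.exp_add]; simp
  nlinarith [Real.exp_pos (-(lam*t))]

lemma Ac_bounds {lam t : ℝ} (hlam : 0 ≤ lam) (ht : 0 ≤ t) :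
    0 ≤ Ac lam t ∧ Ac lam t ≤ 1 + Real.exp lam := by
  have h1 := Cc_nonneg hlam ht
  have h2 := Cc_le hlam ht
  have h3 := Pt_le_one hlam ht
  have hP := Real.exp_pos (-(lam*t))
  constructor
  · unfold Ac; nlinarith [mul_nonneg hlam ht]
  · unfold Ac
    nlinarith [mul_nonneg (mul_nonneg h1 ht) ht, sq_nonneg t, sq_nonneg (1+t),
      mul_nonneg h1 (by nlinarith : (0:ℝ) ≤ (1+t)^2 - t^2)]

lemma Bc_bounds {lam t : ℝ} (hlam : 0 ≤ lam) (ht : 0 ≤ t) :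
    0 ≤ Bc lam t ∧ Bc lam t ≤ lam + Real.exp lam := by
  have h1 := Cc_nonneg hlam ht
  have h2 := Cc_le hlam ht
  have hP := Real.exp_pos (-(lam*t))
  have hP1 : Real.exp (-(lam*t)) ≤ 1 := by
    rw [Real.exp_le_one_iff]; nlinarith
  constructor
  · unfold Bc; nlinarith [mul_nonneg h1 ht]
  · unfold Bc
    nlinarith [mul_nonneg h1 (by nlinarith : (0:ℝ) ≤ (1+t)^2 - 2*t)]

lemma ACt_identity {lam t : ℝ} (ht : 0 ≤ t) :
    Ac lam t + Cc lam t * t = (Real.exp (-(lam*t)) + t * Real.exp lam)/(1+t) := by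
  have ht1 : (1:ℝ) + t ≠ 0 := by positivity
  unfold Ac Cc
  field_simp
  ring


lemma gpos {lam t : ℝ} (ht : 0 ≤ t) : 0 < Real.exp (-(lam*t)) + t * Real.exp lam := by
  have := Real.exp_pos (-(lam*t)); nlinarith [mul_nonneg ht (Real.exp_pos lam).le]

lemma taylor3 {x : ℝ} (hx : 0 ≤ x) : 1 + x + x^2/2 + x^3/6 ≤ Real.exp x := by
  have h := Real.sum_le_exp_of_nonneg hx 4
  have h2 : ∑ i ∈ Finset.range 4, x ^ i / (Nat.factorial i : ℝ) = 1 + x + x^2/2 + x^3/6 := by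
    norm_num [Finset.sum_range_succ, Nat.factorial]
  rw [h2] at h
  linarith

lemma fgl_concave {lam : ℝ} (hlam : 0 ≤ lam) :
    ConcaveOn ℝ (Set.Ici 0)
      (fun t => Real.log (Real.exp (-(lam*t)) + t * Real.exp lam) - Real.log (1+t)) := by
  set g : ℝ → ℝ := fun t => Real.exp (-(lam*t)) + t * Real.exp lam with hg_def
  have hgpos : ∀ t : ℝ, 0 ≤ t → 0 < g t := fun t ht => gpos ht
  -- derivative data
  have hgd : ∀ t : ℝ, HasDerivAt g (-lam * Real.exp (-(lam*t)) + Real.exp lam) t := by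
    intro t
    have h1 : HasDerivAt (fun t : ℝ => Real.exp (-(lam*t))) (-lam * Real.exp (-(lam*t))) t := by
      have := (((hasDerivAt_id t).const_mul lam).neg).exp
      simpa [mul_comm] using this
    have h2 : HasDerivAt (fun t : ℝ => t * Real.exp lam) (Real.exp lam) t := by
      simpa using (hasDerivAt_id t).mul_const (Real.exp lam)
    exact h1.add h2
  have hgdd : ∀ t : ℝ, HasDerivAt (fun t => -lam * Real.exp (-(lam*t)) + Real.exp lam)
      (lam^2 * Real.exp (-(lam*t))) t := by
    intro t
    have h1 : HasDerivAt (fun t : ℝ => Real.exp (-(lam*t))) (-lam * Real.exp (-(lam*t))) t := by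
      have := (((hasDerivAt_id t).const_mul lam).neg).exp
      simpa [mul_comm] using this
    have := (h1.const_mul (-lam)).add_const (Real.exp lam)
    refine this.congr_deriv ?_
    ring
  apply concaveOn_of_hasDerivWithinAt2_nonpos (f' := fun t =>
      (-lam * Real.exp (-(lam*t)) + Real.exp lam) / g t - (1+t)⁻¹)
    (f'' := fun t =>
      ((lam^2 * Real.exp (-(lam*t))) * g t - (-lam * Real.exp (-(lam*t)) + Real.exp lam)^2) / (g t)^2
        + (1+t)⁻¹^2)
    (convex_Ici 0)
  · -- continuity
    apply ContinuousOn.sub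
    · apply ContinuousOn.log
      · fun_prop
      · intro t ht; exact (hgpos t ht).ne'
    · apply ContinuousOn.log
      · fun_prop
      · intro t ht
        simp only [Set.mem_Ici] at ht
        positivity
  · intro t ht
    rw [interior_Ici] at ht
    have ht' : (0:ℝ) < t := ht
    have hd1 : HasDerivAt (fun t => Real.log (g t) - Real.log (1+t))
        ((-lam * Real.exp (-(lam*t)) + Real.exp lam) / g t - (1+t)⁻¹) t := by
      have hl1 : HasDerivAt (fun t => Real.log (g t))
          ((-lam * Real.exp (-(lam*t)) + Real.exp lam) / g t) t :=
        (hgd t).log (hgpos t ht'.le).ne'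
      have hl2 : HasDerivAt (fun t : ℝ => Real.log (1+t)) ((1+t)⁻¹) t := by
        have h0 : HasDerivAt (fun t : ℝ => 1 + t) 1 t := by
          simpa using (hasDerivAt_id t).const_add 1
        have := h0.log (by positivity)
        simpa using this
      exact hl1.sub hl2
    exact hd1.hasDerivWithinAt
  · intro t ht
    rw [interior_Ici] at ht
    have ht' : (0:ℝ) < t := ht
    have hd2 : HasDerivAt (fun t => (-lam * Real.exp (-(lam*t)) + Real.exp lam) / g t - (1+t)⁻¹)
        (((lam^2 * Real.exp (-(lam*t))) * g t
          - (-lam * Real.exp (-(lam*t)) + Real.exp lam)^2) / (g t)^2 + (1+t)⁻¹^2) t := by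
      have hq : HasDerivAt (fun t => (-lam * Real.exp (-(lam*t)) + Real.exp lam) / g t)
          (((lam^2 * Real.exp (-(lam*t))) * g t
            - (-lam * Real.exp (-(lam*t)) + Real.exp lam) * (-lam * Real.exp (-(lam*t)) + Real.exp lam)) / (g t)^2) t :=
        (hgdd t).div (hgd t) (hgpos t ht'.le).ne'
      have hinv : HasDerivAt (fun t : ℝ => (1+t)⁻¹) (-1/(1+t)^2) t := by
        have h0 : HasDerivAt (fun t : ℝ => 1 + t) 1 t := by
          simpa using (hasDerivAt_id t).const_add 1
        have := h0.inv (by positivity)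
        exact this
      have := hq.sub hinv
      refine this.congr_deriv ?_
      field_simp
      ring
    exact hd2.hasDerivWithinAt
  · intro t ht
    rw [interior_Ici] at ht
    have ht' : (0:ℝ) < t := ht
    -- the analytic inequality
    set P := Real.exp (-(lam*t)) with hP_def
    set R := Real.exp (lam*(1+t)) with hR_def
    have hPpos : 0 < P := Real.exp_pos _
    have hRpos : 0 < R := Real.exp_pos _
    have hQ : Real.exp lam = P * R := by
      rw [hP_def, hR_def, ← Real.exp_add]; ring_nf
    have hmu : 0 ≤ lam*(1+t) := by positivity
    have hT3 : 1 + lam*(1+t) + (lam*(1+t))^2/2 + (lam*(1+t))^3/6 ≤ R := taylor3 hmu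
    have h1 : (lam*(1+t))^2 + 2*(lam*(1+t)) + 2 ≤ 2*R := by nlinarith [pow_nonneg hmu 3]
    have h2 : 2*(lam*(1+t))*R + 1 ≤ R^2 := by
      nlinarith [mul_nonneg (by nlinarith : (0:ℝ) ≤ R - (1+lam*(1+t)+(lam*(1+t))^2/2+(lam*(1+t))^3/6))
        (by nlinarith : (0:ℝ) ≤ R + (1+lam*(1+t)+(lam*(1+t))^2/2+(lam*(1+t))^3/6) - 2*(lam*(1+t))),
        pow_nonneg hmu 3, pow_nonneg hmu 4, pow_nonneg hmu 5, pow_nonneg hmu 6]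
    have hgt : g t = P + t * (P*R) := by rw [hg_def, hQ]
    have key : ((lam^2 * P) * g t - (-lam * P + Real.exp lam)^2) * (1+t)^2 + (g t)^2 ≤ 0 := by
      rw [hgt, hQ]
      have hh1 : 0 ≤ P^2 * (t*R*(2*R - ((lam*(1+t))^2+2*(lam*(1+t))+2))) :=
        mul_nonneg (sq_nonneg P) (mul_nonneg (mul_nonneg ht'.le hRpos.le) (by linarith))
      have hh2 : 0 ≤ P^2 * (R^2 - 2*(lam*(1+t))*R - 1) := mul_nonneg (sq_nonneg P) (by linarith)
      nlinarith [hh1, hh2]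
    have hgt2 : (0:ℝ) < (g t)^2 := by positivity
    have h1t : (0:ℝ) < (1+t)^2 := by positivity
    have heq : ((lam^2 * Real.exp (-(lam*t))) * g t - (-lam * Real.exp (-(lam*t)) + Real.exp lam)^2) / (g t)^2
        + (1+t)⁻¹^2
        = (((lam^2 * P) * g t - (-lam * P + Real.exp lam)^2) * (1+t)^2 + (g t)^2)
          / ((g t)^2 * (1+t)^2) := by
      rw [← hP_def]
      field_simp
      rw [div_add_one hgt2.ne']
    rw [heq]
    exact div_nonpos_of_nonpos_of_nonneg key (by positivity)
lemma measurable_Cc (lam : ℝ) : Measurable (Cc lam) := by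
  unfold Cc; fun_prop

lemma measurable_Ac (lam : ℝ) : Measurable (Ac lam) := by
  unfold Ac; have := measurable_Cc lam; fun_prop

lemma measurable_Bc (lam : ℝ) : Measurable (Bc lam) := by
  unfold Bc; have := measurable_Cc lam; fun_prop

lemma pos_setIntegral {Ω : Type*} [m : MeasurableSpace Ω] (μ : Measure Ω) (f : Ω → ℝ)
    (hint : Integrable f μ) (hpos : ∀ ω, 0 < f ω) {A : Set Ω} (hμA : 0 < μ A) :
    0 < ∫ ω in A, f ω ∂μ := by
  rw [setIntegral_pos_iff_support_of_nonneg_ae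
    (Filter.Eventually.of_forall fun ω => (hpos ω).le) hint.integrableOn]
  have hsupp : Function.support f ∩ A = A := by
    ext ω
    simp [Function.support, (hpos ω).ne']
  rw [hsupp]
  exact hμA

lemma condexp_log_bound {Ω : Type*} [m : MeasurableSpace Ω] (μ : Measure Ω)
    [IsProbabilityMeasure μ] (F : MeasurableSpace Ω) (hm : F ≤ m)
    (X : Ω → ℝ) (hXm : Measurable[m] X)
    (hXint : Integrable X μ) (hX2int : Integrable (fun ω => (X ω)^2) μ)
    (hsuper : ∀ᵐ ω ∂μ, (μ[X | F]) ω ≤ 0)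
    (hb : ∀ᵐ ω ∂μ, X ω ≤ 1) {lam : ℝ} (hlam : 0 ≤ lam) :
    ∀ᵐ ω ∂μ,
      Real.log ((μ[fun ω' => Real.exp (lam * X ω') | F]) ω)
        ≤ Real.log (Real.exp (-(lam * (μ[fun ω' => (X ω')^2 | F]) ω))
              + (μ[fun ω' => (X ω')^2 | F]) ω * Real.exp lam)
          - Real.log (1 + (μ[fun ω' => (X ω')^2 | F]) ω)
      ∧ 0 ≤ (μ[fun ω' => (X ω')^2 | F]) ω := by
  haveI : IsFiniteMeasure (μ.trim hm) := isFiniteMeasure_trim hm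
  set v : Ω → ℝ := μ[fun ω' => (X ω')^2 | F] with hv_def
  have hv0 : 0 ≤ᵐ[μ] v := condExp_nonneg (Eventually.of_forall fun ω => sq_nonneg _)
  set expX : Ω → ℝ := fun ω => Real.exp (lam * X ω) with hexpX_def
  have hexpX_meas : AEStronglyMeasurable[m] expX μ :=
    Measurable.aestronglyMeasurable (μ := μ) ((hXm.const_mul lam).exp)
  have hexpX_int : Integrable expX μ := by
    refine Integrable.mono' (integrable_const (Real.exp lam)) hexpX_meas ?_
    filter_upwards [hb] with ω h
    rw [Real.norm_eq_abs, abs_of_pos (Real.exp_pos _)]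
    exact Real.exp_le_exp.2 (by nlinarith)
  have hvF : StronglyMeasurable[F] v := stronglyMeasurable_condExp
  have hvFm : Measurable[F] v := hvF.measurable
  -- coefficient functions
  have hAsm : StronglyMeasurable[F] (fun ω => Ac lam (v ω)) :=
    (((measurable_Ac lam).comp hvFm)).stronglyMeasurable
  have hBsm : StronglyMeasurable[F] (fun ω => Bc lam (v ω)) :=
    (((measurable_Bc lam).comp hvFm)).stronglyMeasurable
  have hCsm : StronglyMeasurable[F] (fun ω => Cc lam (v ω)) :=
    (((measurable_Cc lam).comp hvFm)).stronglyMeasurable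
  have hAint : Integrable (fun ω => Ac lam (v ω)) μ := by
    refine Integrable.mono' (integrable_const (1 + Real.exp lam))
      ((hAsm.mono hm).aestronglyMeasurable) ?_
    filter_upwards [hv0] with ω h0
    rw [Real.norm_eq_abs, abs_of_nonneg (Ac_bounds hlam h0).1]
    exact (Ac_bounds hlam h0).2
  have hBbound : ∀ᵐ ω ∂μ, ‖Bc lam (v ω)‖ ≤ lam + Real.exp lam := by
    filter_upwards [hv0] with ω h0
    rw [Real.norm_eq_abs, abs_of_nonneg (Bc_bounds hlam h0).1]
    exact (Bc_bounds hlam h0).2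
  have hCbound : ∀ᵐ ω ∂μ, ‖Cc lam (v ω)‖ ≤ Real.exp lam := by
    filter_upwards [hv0] with ω h0
    rw [Real.norm_eq_abs, abs_of_nonneg (Cc_nonneg hlam h0)]
    nlinarith [Cc_le hlam h0, Cc_nonneg hlam h0, sq_nonneg (v ω), mul_nonneg (Cc_nonneg hlam h0) h0]
  have hBXint : Integrable (fun ω => Bc lam (v ω) * X ω) μ :=
    hXint.bdd_mul ((hBsm.mono hm).aestronglyMeasurable) hBbound
  have hCX2int : Integrable (fun ω => Cc lam (v ω) * (X ω)^2) μ :=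
    hX2int.bdd_mul ((hCsm.mono hm).aestronglyMeasurable) hCbound
  -- pointwise bound
  have hptwise : expX ≤ᵐ[μ]
      fun ω => Ac lam (v ω) + Bc lam (v ω) * X ω + Cc lam (v ω) * (X ω)^2 := by
    filter_upwards [hb, hv0] with ω h1 h0
    exact quad_bound hlam h1 h0
  have hRHSint : Integrable
      (fun ω => Ac lam (v ω) + Bc lam (v ω) * X ω + Cc lam (v ω) * (X ω)^2) μ :=
    (hAint.add hBXint).add hCX2int
  have hcond := condExp_mono (m := F) hexpX_int hRHSint hptwise
  -- decompose RHS condexp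
  have hsplit : μ[fun ω => Ac lam (v ω) + Bc lam (v ω) * X ω + Cc lam (v ω) * (X ω)^2 | F]
      =ᵐ[μ] μ[fun ω => Ac lam (v ω) | F] + μ[fun ω => Bc lam (v ω) * X ω | F]
        + μ[fun ω => Cc lam (v ω) * (X ω)^2 | F] := by
    have h1 := condExp_add (μ := μ) (m := F) (hAint.add hBXint) hCX2int
    have h2 := condExp_add (μ := μ) (m := F) hAint hBXint
    calc μ[fun ω => Ac lam (v ω) + Bc lam (v ω) * X ω + Cc lam (v ω) * (X ω)^2 | F]
        =ᵐ[μ] μ[(fun ω => Ac lam (v ω) + Bc lam (v ω) * X ω) + fun ω => Cc lam (v ω) * (X ω)^2 | F] := by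
          apply condExp_congr_ae; rfl
      _ =ᵐ[μ] μ[fun ω => Ac lam (v ω) + Bc lam (v ω) * X ω | F]
          + μ[fun ω => Cc lam (v ω) * (X ω)^2 | F] := h1
      _ =ᵐ[μ] (μ[fun ω => Ac lam (v ω) | F] + μ[fun ω => Bc lam (v ω) * X ω | F])
          + μ[fun ω => Cc lam (v ω) * (X ω)^2 | F] := by
          exact Filter.EventuallyEq.add h2 (Filter.EventuallyEq.refl _ _)
  have hA_eq : μ[fun ω => Ac lam (v ω) | F] = fun ω => Ac lam (v ω) :=
    condExp_of_stronglyMeasurable hm hAsm hAint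
  have hB_eq : μ[fun ω => Bc lam (v ω) * X ω | F]
      =ᵐ[μ] (fun ω => Bc lam (v ω)) * μ[X | F] := by
    have := condExp_stronglyMeasurable_mul_of_bound hm hBsm hXint (lam + Real.exp lam) hBbound
    exact this
  have hC_eq : μ[fun ω => Cc lam (v ω) * (X ω)^2 | F]
      =ᵐ[μ] (fun ω => Cc lam (v ω)) * v := by
    have := condExp_stronglyMeasurable_mul_of_bound hm hCsm hX2int (Real.exp lam) hCbound
    exact this
  -- positivity of L
  set L : Ω → ℝ := μ[expX | F] with hL_def
  have hLpos : ∀ᵐ ω ∂μ, 0 < L ω := by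
    set A : Set Ω := {ω | L ω ≤ 0} with hA_def
    have hLFm : Measurable[F] L := (stronglyMeasurable_condExp (m := F)).measurable
    have hAmeas : MeasurableSet[F] A := hLFm measurableSet_Iic
    by_cases hμA : μ A = 0
    · have : ∀ᵐ ω ∂μ, ω ∉ A := by
        rw [ae_iff]
        convert hμA using 2
        ext ω; simp [hA_def]
      filter_upwards [this] with ω h
      simpa [hA_def, not_le] using h
    · exfalso
      have hμApos : 0 < μ A := lt_of_le_of_ne zero_le (Ne.symm hμA)
      have hint_eq : ∫ ω in A, L ω ∂μ = ∫ ω in A, expX ω ∂μ :=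
        setIntegral_condExp hm hexpX_int hAmeas
      have hle0 : ∫ ω in A, L ω ∂μ ≤ 0 := by
        apply integral_nonpos_of_ae
        have hres : ∀ᵐ ω ∂(μ.restrict A), L ω ≤ 0 :=
          (ae_restrict_iff' (hm A hAmeas)).2 (Eventually.of_forall fun ω h => h)
        filter_upwards [hres] with ω h
        exact h
      have hgt0 : 0 < ∫ ω in A, expX ω ∂μ :=
        pos_setIntegral (m := m) μ expX hexpX_int (fun ω => Real.exp_pos _) hμApos
      linarith [hint_eq ▸ hle0]
  -- combine
  filter_upwards [hcond, hsplit, hB_eq, hC_eq, hsuper, hLpos, hv0] with ω h1 h2 h3 h4 h5 h6 h0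
  have h0' : (0:ℝ) ≤ v ω := h0
  refine ⟨?_, h0'⟩
  have hL_le : L ω ≤ Ac lam (v ω) + Cc lam (v ω) * v ω := by
    have hBpos := (Bc_bounds hlam h0').1
    have e1 : (μ[fun ω => Ac lam (v ω) | F]) ω = Ac lam (v ω) := by rw [hA_eq]
    have := h1.trans (le_of_eq h2)
    simp only [Pi.add_apply] at this
    rw [e1, h3, h4] at this
    simp only [Pi.mul_apply] at this
    nlinarith [mul_nonpos_of_nonneg_of_nonpos hBpos h5]
  have hgp : 0 < Real.exp (-(lam * v ω)) + v ω * Real.exp lam := gpos h0'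
  have h1t : (0:ℝ) < 1 + v ω := by linarith [h0']
  have : L ω ≤ (Real.exp (-(lam * v ω)) + v ω * Real.exp lam)/(1 + v ω) := by
    rw [← ACt_identity h0']; exact hL_le
  calc Real.log (L ω) ≤ Real.log ((Real.exp (-(lam * v ω)) + v ω * Real.exp lam)/(1 + v ω)) :=
        Real.log_le_log h6 this
    _ = Real.log (Real.exp (-(lam * v ω)) + v ω * Real.exp lam) - Real.log (1 + v ω) :=
        Real.log_div hgp.ne' h1t.ne'
theorem cumulant_bound {Ω : Type*} [m : MeasurableSpace Ω] (μ : Measure Ω)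
    [IsProbabilityMeasure μ] (n : ℕ) (ℱ : ℕ → MeasurableSpace Ω)
    (hmono : Monotone ℱ) (hle : ∀ i, ℱ i ≤ m)
    (ξ : ℕ → Ω → ℝ)
    (hadapt : ∀ i, 1 ≤ i → i ≤ n → Measurable[ℱ i] (ξ i))
    (hint : ∀ i, 1 ≤ i → i ≤ n → Integrable (ξ i) μ)
    (hint2 : ∀ i, 1 ≤ i → i ≤ n → Integrable (fun ω => (ξ i ω)^2) μ)
    (hsuper : ∀ i, 1 ≤ i → i ≤ n → ∀ᵐ ω ∂μ, (μ[ξ i | ℱ (i-1)]) ω ≤ 0)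
    (hbound : ∀ i, 1 ≤ i → i ≤ n → ∀ᵐ ω ∂μ, ξ i ω ≤ 1)
    (lam : ℝ) (hlam : 0 ≤ lam) (k : ℕ) (hk1 : 1 ≤ k) (hkn : k ≤ n) :
    ∀ᵐ ω ∂μ,
      ∑ i ∈ Finset.Icc 1 k,
          Real.log ((μ[fun ω' => Real.exp (lam * ξ i ω') | ℱ (i-1)]) ω)
        ≤ (k : ℝ) *
          Real.log ((1/(1 + (∑ i ∈ Finset.Icc 1 k, (μ[fun ω' => (ξ i ω')^2 | ℱ (i-1)]) ω) / k))
              * Real.exp (-(lam * ((∑ i ∈ Finset.Icc 1 k, (μ[fun ω' => (ξ i ω')^2 | ℱ (i-1)]) ω) / k)))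
            + (((∑ i ∈ Finset.Icc 1 k, (μ[fun ω' => (ξ i ω')^2 | ℱ (i-1)]) ω) / k)
                / (1 + (∑ i ∈ Finset.Icc 1 k, (μ[fun ω' => (ξ i ω')^2 | ℱ (i-1)]) ω) / k))
              * Real.exp lam) := by
  have hQ : ∀ᵐ ω ∂μ, ∀ i, i ∈ Finset.Icc 1 k →
      (Real.log ((μ[fun ω' => Real.exp (lam * ξ i ω') | ℱ (i-1)]) ω)
        ≤ Real.log (Real.exp (-(lam * (μ[fun ω' => (ξ i ω')^2 | ℱ (i-1)]) ω))
              + (μ[fun ω' => (ξ i ω')^2 | ℱ (i-1)]) ω * Real.exp lam)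
          - Real.log (1 + (μ[fun ω' => (ξ i ω')^2 | ℱ (i-1)]) ω)
      ∧ 0 ≤ (μ[fun ω' => (ξ i ω')^2 | ℱ (i-1)]) ω) := by
    rw [ae_all_iff]
    intro i
    by_cases hi : i ∈ Finset.Icc 1 k
    · have hi1 : 1 ≤ i := (Finset.mem_Icc.1 hi).1
      have hin : i ≤ n := le_trans (Finset.mem_Icc.1 hi).2 hkn
      have hXm : Measurable[m] (ξ i) := (hadapt i hi1 hin).mono (hle i) le_rfl
      filter_upwards [condexp_log_bound μ (ℱ (i-1)) (hle _) (ξ i) hXm (hint i hi1 hin)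
        (hint2 i hi1 hin) (hsuper i hi1 hin) (hbound i hi1 hin) hlam] with ω h
      exact fun _ => h
    · exact Eventually.of_forall fun ω h => absurd h hi
  filter_upwards [hQ] with ω h
  set T : ℝ := (∑ i ∈ Finset.Icc 1 k, (μ[fun ω' => (ξ i ω')^2 | ℱ (i-1)]) ω) / (k:ℝ) with hT_def
  set v : ℕ → ℝ := fun i => (μ[fun ω' => (ξ i ω')^2 | ℱ (i-1)]) ω with hv_def
  have hkpos : (0:ℝ) < k := by exact_mod_cast hk1
  have hv0 : ∀ i ∈ Finset.Icc 1 k, 0 ≤ v i := fun i hi => (h i hi).2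
  have hS0 : 0 ≤ ∑ i ∈ Finset.Icc 1 k, v i := Finset.sum_nonneg hv0
  have hTv : T = (∑ i ∈ Finset.Icc 1 k, v i) / (k:ℝ) := rfl
  have hT0 : 0 ≤ T := by rw [hTv]; exact div_nonneg hS0 hkpos.le
  set F : ℝ → ℝ := fun t => Real.log (Real.exp (-(lam*t)) + t * Real.exp lam) - Real.log (1+t)
    with hF_def
  -- Jensen
  have hJ : ∑ i ∈ Finset.Icc 1 k, ((k:ℝ)⁻¹ • F (v i)) ≤ F (∑ i ∈ Finset.Icc 1 k, (k:ℝ)⁻¹ • v i) := by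
    apply (fgl_concave hlam).le_map_sum
    · intro i _; positivity
    · rw [Finset.sum_const, Nat.card_Icc]
      simp only [nsmul_eq_mul]
      rw [Nat.add_sub_cancel]
      field_simp
    · intro i hi; exact hv0 i hi
  have hsum_eq : ∑ i ∈ Finset.Icc 1 k, (k:ℝ)⁻¹ • v i = T := by
    rw [hTv]
    simp only [smul_eq_mul]
    rw [← Finset.mul_sum, inv_mul_eq_div]
  rw [hsum_eq] at hJ
  have hmul : (k:ℝ) * ∑ i ∈ Finset.Icc 1 k, ((k:ℝ)⁻¹ • F (v i))
      = ∑ i ∈ Finset.Icc 1 k, F (v i) := by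
    simp only [smul_eq_mul]
    rw [← Finset.mul_sum, ← mul_assoc, mul_inv_cancel₀ hkpos.ne', one_mul]
  have hchain : ∑ i ∈ Finset.Icc 1 k,
      Real.log ((μ[fun ω' => Real.exp (lam * ξ i ω') | ℱ (i-1)]) ω) ≤ (k:ℝ) * F T := by
    calc ∑ i ∈ Finset.Icc 1 k, Real.log ((μ[fun ω' => Real.exp (lam * ξ i ω') | ℱ (i-1)]) ω)
        ≤ ∑ i ∈ Finset.Icc 1 k, F (v i) := Finset.sum_le_sum (fun i hi => (h i hi).1)
      _ = (k:ℝ) * ∑ i ∈ Finset.Icc 1 k, ((k:ℝ)⁻¹ • F (v i)) := hmul.symm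
      _ ≤ (k:ℝ) * F T := mul_le_mul_of_nonneg_left hJ hkpos.le
  have hgp : 0 < Real.exp (-(lam*T)) + T * Real.exp lam := gpos hT0
  have h1T : (0:ℝ) < 1 + T := by linarith
  have hinner : (1/(1+T)) * Real.exp (-(lam*T)) + (T/(1+T)) * Real.exp lam
      = (Real.exp (-(lam*T)) + T * Real.exp lam)/(1+T) := by
    field_simp
  rw [hinner, Real.log_div hgp.ne' h1T.ne']
  exact hchain
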